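/- Let 𝓛(θ) = −∫₀^θ ln|2 sin t| dt (the Lobachevsky function) and define f(x) = 𝓛(π/4 + π/(2x)) + 𝓛(π/4 − π/(2x)) for real x. Then for every real x > 2, f(x) < 2·𝓛(π/4). -/

import Mathlib

open Real MeasureTheory intervalIntegral Set

/-- The Lobachevsky function `𝓛(θ) = -∫₀^θ ln |2 sin t| dt`. -/
noncomputable def lobachevsky (θ : ℝ) : ℝ :=
  -∫ t in (0:ℝ)..θ, Real.log |2 * Real.sin t|

/-- The normalized volume function `f(x) = 𝓛(π/4 + π/(2x)) + 𝓛(π/4 - π/(2x))`. -/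
noncomputable def pretzelVolumeFn (x : ℝ) : ℝ :=
  lobachevsky (Real.pi / 4 + Real.pi / (2 * x)) +
    lobachevsky (Real.pi / 4 - Real.pi / (2 * x))

/-- `log` is interval integrable on `[0,1]`. -/
lemma intervalIntegrable_log01 : IntervalIntegrable Real.log volume 0 1 := by
  have key : IntervalIntegrable (fun t : ℝ => -Real.log t) volume 0 1 := by
    apply intervalIntegrable_deriv_of_nonneg (g := fun t : ℝ => t - t * Real.log t)
    · exact (continuous_id.sub Real.continuous_mul_log).continuousOn
    · intro t ht
      simp only [min_eq_left (zero_le_one' ℝ), max_eq_right (zero_le_one' ℝ)] at ht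
      have h1 : HasDerivAt (fun t : ℝ => t * Real.log t) (Real.log t + 1) t :=
        Real.hasDerivAt_mul_log (ne_of_gt ht.1)
      have h2 := (hasDerivAt_id t).sub h1
      convert (show HasDerivAt (fun t : ℝ => t - t * Real.log t) (1 - (Real.log t + 1)) t from h2) using 1
      ring
    · intro t ht
      simp only [min_eq_left (zero_le_one' ℝ), max_eq_right (zero_le_one' ℝ)] at ht
      have := Real.log_nonpos ht.1.le ht.2.le
      linarith
  rw [show Real.log = -fun t : ℝ => -Real.log t from by ext t; simp]
  exact key.neg

/-- `log` is interval integrable on `[0,u]` for `0 < u`. -/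
lemma intervalIntegrable_log0u {u : ℝ} (hu : 0 < u) :
    IntervalIntegrable Real.log volume 0 u := by
  rcases le_total u 1 with h | h
  · refine intervalIntegrable_log01.mono_set ?_
    rw [Set.uIcc_of_le hu.le, Set.uIcc_of_le zero_le_one]
    exact Set.Icc_subset_Icc le_rfl h
  · refine intervalIntegrable_log01.trans (intervalIntegrable_log ?_)
    rw [Set.uIcc_of_le h]
    intro hmem
    exact absurd hmem.1 (by norm_num)

/-- The integrand of the Lobachevsky function is interval integrable on `[0,u]`
for `0 < u < π/2`. -/
lemma intervalIntegrable_log_two_sin {u : ℝ} (hu : 0 < u) (hu' : u < Real.pi / 2) :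
    IntervalIntegrable (fun t : ℝ => Real.log |2 * Real.sin t|) volume 0 u := by
  have hπ := Real.pi_pos
  refine IntervalIntegrable.mono_fun
    (((intervalIntegrable_log0u hu).abs).add
      (_root_.intervalIntegrable_const (c := (1:ℝ)))) ?_ ?_
  · exact (Real.measurable_log.comp
      ((measurable_const.mul Real.measurable_sin).abs)).aestronglyMeasurable
  · filter_upwards [ae_restrict_mem measurableSet_uIoc] with t ht
    rw [Set.uIoc_of_le hu.le] at ht
    have ht0 : 0 < t := ht.1
    have htπ : t < Real.pi / 2 := lt_of_le_of_lt ht.2 hu'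
    have hsin : 0 < Real.sin t := Real.sin_pos_of_pos_of_lt_pi ht0 (by linarith)
    have habs : |2 * Real.sin t| = 2 * Real.sin t := abs_of_pos (by positivity)
    have hlow : t ≤ 2 * Real.sin t := by
      have h := Real.mul_le_sin ht0.le htπ.le
      have h' : 2 * t ≤ Real.pi * Real.sin t := by
        have hππ : Real.pi * (2 / Real.pi * t) = 2 * t := by field_simp
        have := mul_le_mul_of_nonneg_left h hπ.le
        linarith
      nlinarith [mul_le_mul_of_nonneg_right Real.pi_le_four hsin.le]
    have hup : 2 * Real.sin t ≤ 2 * t := by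
      nlinarith [Real.sin_le ht0.le]
    have h1 : Real.log t ≤ Real.log (2 * Real.sin t) := Real.log_le_log ht0 hlow
    have h2 : Real.log (2 * Real.sin t) ≤ Real.log 2 + Real.log t := by
      calc Real.log (2 * Real.sin t) ≤ Real.log (2 * t) :=
            Real.log_le_log (by positivity) hup
        _ = Real.log 2 + Real.log t := Real.log_mul two_ne_zero ht0.ne'
    have hlog2 : Real.log 2 < 1 := by
      have := Real.log_two_lt_d9; linarith
    simp only [Real.norm_eq_abs]
    rw [habs, abs_of_nonneg (by positivity : (0:ℝ) ≤ |Real.log t| + 1)]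
    rw [abs_le]
    constructor
    · have := neg_abs_le (Real.log t)
      linarith
    · have := le_abs_self (Real.log t)
      have h2pos : (0:ℝ) < Real.log 2 := Real.log_pos (by norm_num)
      linarith

theorem pretzelVolumeFn_lt_limit (x : ℝ) (hx : 2 < x) :
    pretzelVolumeFn x < 2 * lobachevsky (Real.pi / 4) := by
  have hπ := Real.pi_pos
  have hx0 : (0:ℝ) < x := by linarith
  set ε : ℝ := Real.pi / (2 * x) with hεdef
  have hε : 0 < ε := by positivity
  have hε4 : ε < Real.pi / 4 := by
    rw [hεdef, div_lt_div_iff₀ (by positivity) (by norm_num)]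
    nlinarith
  set g : ℝ → ℝ := fun t => Real.log |2 * Real.sin t| with hg
  set a : ℝ := Real.pi / 4 - ε with hadef
  set b : ℝ := Real.pi / 4 with hbdef
  set c : ℝ := Real.pi / 4 + ε with hcdef
  have ha0 : 0 < a := by rw [hadef]; linarith
  have hab : a < b := by rw [hadef]; linarith
  have hbc : b < c := by rw [hcdef]; linarith
  have hcπ : c < Real.pi / 2 := by rw [hcdef]; linarith
  have hae : a + ε = b := by rw [hadef]; ring
  have hbe : b + ε = c := by rw [hbdef, hcdef]
  have hgcont : ∀ {s : Set ℝ}, s ⊆ Set.Ioo 0 (Real.pi / 2) → ContinuousOn g s := by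
    intro s hs
    apply ContinuousOn.log ((continuous_const.mul Real.continuous_sin).abs.continuousOn)
    intro t ht
    have h := hs ht
    have hsin : 0 < Real.sin t := Real.sin_pos_of_pos_of_lt_pi h.1 (by linarith [h.2])
    exact abs_ne_zero.mpr (mul_pos two_pos hsin).ne'
  have Ia : IntervalIntegrable g volume 0 a :=
    intervalIntegrable_log_two_sin ha0 (by linarith)
  have Ib : IntervalIntegrable g volume 0 b :=
    intervalIntegrable_log_two_sin (by linarith) (by linarith)
  have Iab : IntervalIntegrable g volume a b := by
    apply ContinuousOn.intervalIntegrable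
    apply hgcont
    rw [Set.uIcc_of_le hab.le]
    exact fun t ht => ⟨lt_of_lt_of_le ha0 ht.1, lt_of_le_of_lt ht.2 (by linarith)⟩
  have Ibc : IntervalIntegrable g volume b c := by
    apply ContinuousOn.intervalIntegrable
    apply hgcont
    rw [Set.uIcc_of_le hbc.le]
    exact fun t ht => ⟨lt_of_lt_of_le (by linarith : (0:ℝ) < b) ht.1,
      lt_of_le_of_lt ht.2 hcπ⟩
  have h1 : (∫ t in (0:ℝ)..a, g t) + ∫ t in a..b, g t = ∫ t in (0:ℝ)..b, g t :=
    integral_add_adjacent_intervals Ia Iab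
  have h2 : (∫ t in (0:ℝ)..b, g t) + ∫ t in b..c, g t = ∫ t in (0:ℝ)..c, g t :=
    integral_add_adjacent_intervals Ib Ibc
  have hpt : ∀ t ∈ Set.Icc a b, g t < g (t + ε) := by
    intro t ht
    have ht0 : 0 < t := lt_of_lt_of_le ha0 ht.1
    have htε : t + ε ≤ Real.pi / 2 := by
      have h2 := ht.2; linarith
    have hsin1 : 0 < Real.sin t := Real.sin_pos_of_pos_of_lt_pi ht0 (by linarith)
    have hslt : Real.sin t < Real.sin (t + ε) :=
      Real.sin_lt_sin_of_lt_of_le_pi_div_two (by linarith) htε (by linarith)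
    have hsin2 : 0 < Real.sin (t + ε) := lt_trans hsin1 hslt
    simp only [hg]
    rw [abs_of_pos (by positivity : (0:ℝ) < 2 * Real.sin t),
      abs_of_pos (by positivity : (0:ℝ) < 2 * Real.sin (t + ε))]
    exact Real.log_lt_log (by positivity) (by linarith)
  have key : (∫ t in a..b, g t) < ∫ t in b..c, g t := by
    have hsub : (∫ t in a..b, g (t + ε)) = ∫ t in b..c, g t := by
      rw [intervalIntegral.integral_comp_add_right, hae, hbe]
    rw [← hsub]
    apply integral_lt_integral_of_continuousOn_of_le_of_exists_lt hab
    · apply hgcont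
      exact fun t ht => ⟨lt_of_lt_of_le ha0 ht.1, lt_of_le_of_lt ht.2 (by linarith)⟩
    · apply ContinuousOn.comp (g := g) (f := fun t => t + ε) (t := Set.Icc b c)
      · exact hgcont fun t ht =>
          ⟨lt_of_lt_of_le (by linarith) ht.1, lt_of_le_of_lt ht.2 hcπ⟩
      · exact (continuous_id.add continuous_const).continuousOn
      · exact fun t ht => ⟨show b ≤ t + ε by linarith [ht.1],
          show t + ε ≤ c by linarith [ht.2]⟩
    · exact fun t ht => (hpt t ⟨ht.1.le, ht.2⟩).le
    · exact ⟨a, ⟨le_rfl, hab.le⟩, hpt a ⟨le_rfl, hab.le⟩⟩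
  have hc_eq : pretzelVolumeFn x = -(∫ t in (0:ℝ)..c, g t) + -(∫ t in (0:ℝ)..a, g t) := by
    simp only [pretzelVolumeFn, lobachevsky, hg, hadef, hcdef, hbdef, hεdef]
  have hb_eq : 2 * lobachevsky (Real.pi / 4) = 2 * -(∫ t in (0:ℝ)..b, g t) := by
    simp only [lobachevsky, hg, hbdef]
  rw [hc_eq, hb_eq]
  linarith
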